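/- Let σ ∈ (0,2) and N > 2(10-σ)/(2-σ). Then the generalized Lepin exponent p_L(σ) = (2-σ)(N+σ-4)/(N(2-σ) - 2(10-σ)) satisfies p_L(σ) > p_{JL}(σ), where p_{JL}(σ) = 1 + 2(σ+2)/(N-4-σ-√((2N+σ-2)(σ+2))). -/

import Mathlib

/-- For `σ ∈ (0,2)` and `N > 2(10-σ)/(2-σ)`, the Lepin exponent exceeds the
Joseph–Lundgren exponent. -/
theorem pL_gt_pJL (N σ : ℝ) (hσ0 : 0 < σ) (hσ2 : σ < 2)
    (hdim : N > 2 * (10 - σ) / (2 - σ)) :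
    (2 - σ) * (N + σ - 4) / (N * (2 - σ) - 2 * (10 - σ))
      > 1 + 2 * (σ + 2) / (N - 4 - σ - Real.sqrt ((2 * N + σ - 2) * (σ + 2))) := by
  have h2σ : (0:ℝ) < 2 - σ := by linarith
  have hD1 : 0 < N * (2 - σ) - 2 * (10 - σ) := by
    rw [gt_iff_lt, div_lt_iff₀ h2σ] at hdim; nlinarith
  have hN : N > 10 + 4 * σ := by nlinarith [sq_nonneg σ]
  set s := Real.sqrt ((2 * N + σ - 2) * (σ + 2)) with hs
  have hsnn : 0 ≤ s := Real.sqrt_nonneg _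
  have hs2 : s ^ 2 = (2 * N + σ - 2) * (σ + 2) := by
    rw [hs, sq, Real.mul_self_sqrt (by nlinarith)]
  have hD2 : 0 < N - 4 - σ - s := by
    nlinarith [sq_nonneg (s - (N - 4 - σ))]
  have hkey : (6 - σ) * s < N * (σ + 2) + σ ^ 2 - 6 * σ + 16 := by
    by_contra h
    push_neg at h
    have hR : 0 < N * (σ + 2) + σ ^ 2 - 6 * σ + 16 := by nlinarith
    have h1 := mul_le_mul h h (le_of_lt hR)
      (mul_nonneg (by linarith : (0:ℝ) ≤ 6 - σ) hsnn)
    have h2 : (6 - σ) * s * ((6 - σ) * s) = (6 - σ) ^ 2 * ((2 * N + σ - 2) * (σ + 2)) := by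
      rw [show (6 - σ) * s * ((6 - σ) * s) = (6 - σ) ^ 2 * s ^ 2 by ring, hs2]
    have hT : 0 < N * (σ + 2) + 6 * σ - 20 := by nlinarith
    nlinarith [h1, h2, mul_pos hT hT]
  rw [gt_iff_lt, ← sub_pos]
  have heq : (2 - σ) * (N + σ - 4) / (N * (2 - σ) - 2 * (10 - σ))
      - (1 + 2 * (σ + 2) / (N - 4 - σ - s))
      = ((6 - σ) * (N - 4 - σ - s) - 2 * (N * (2 - σ) - 2 * (10 - σ))) * (σ + 2)
        / ((N * (2 - σ) - 2 * (10 - σ)) * (N - 4 - σ - s)) := by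
    rw [eq_div_iff (mul_ne_zero hD1.ne' hD2.ne')]
    have k1 := mul_inv_cancel₀ hD1.ne'
    have k2 := mul_inv_cancel₀ hD2.ne'
    simp only [div_eq_mul_inv]
    linear_combination ((2 - σ) * (N + σ - 4) * (N - 4 - σ - s)) * k1
      - (2 * (σ + 2) * (N * (2 - σ) - 2 * (10 - σ))) * k2
  rw [heq]
  apply div_pos
  · apply mul_pos _ (by linarith)
    nlinarith
  · exact mul_pos hD1 hD2
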